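/- Let Y be a real Hilbert space and L : X ⊆ Y → Y a self-adjoint operator on a dense subspace X with spectrum σ(L) disjoint from [-c, c] for some c > 0. If N : Y → Y is Lipschitz with constant n < c, then the map F = L - N : X → Y is a bijection from X onto Y. -/

import Mathlib

open scoped RealInnerProductSpace NNReal

lemma symm_opnorm_le {Y : Type*} [NormedAddCommGroup Y] [InnerProductSpace ℝ Y]
    (A : Y →L[ℝ] Y) (hA : ∀ x y : Y, ⟪A x, y⟫ = ⟪x, A y⟫) {m : ℝ} (hm : 0 ≤ m)
    (h : ∀ z : Y, |⟪A z, z⟫| ≤ m * ‖z‖ ^ 2) : ‖A‖ ≤ m := by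
  refine A.opNorm_le_bound hm fun x => ?_
  rcases eq_or_ne (A x) 0 with hx | hx
  · rw [hx, norm_zero]; positivity
  have hxn : x ≠ 0 := by rintro rfl; simp at hx
  have hxpos : (0:ℝ) < ‖x‖ := norm_pos_iff.mpr hxn
  have hAxpos : (0:ℝ) < ‖A x‖ := norm_pos_iff.mpr hx
  set y := (‖x‖ / ‖A x‖) • (A x) with hy
  have hyn : ‖y‖ = ‖x‖ := by
    rw [hy, norm_smul, Real.norm_eq_abs, abs_of_pos (by positivity)]
    field_simp
  have hinner : ⟪A x, y⟫ = ‖x‖ * ‖A x‖ := by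
    rw [hy, real_inner_smul_right, real_inner_self_eq_norm_sq]
    field_simp
  have pol : ⟪A (x + y), x + y⟫ - ⟪A (x - y), x - y⟫ = 4 * ⟪A x, y⟫ := by
    simp only [map_add, map_sub, inner_add_left, inner_add_right, inner_sub_left,
      inner_sub_right]
    linarith [hA y x, real_inner_comm y (A x)]
  have hb1 := abs_le.mp (h (x + y))
  have hb2 := abs_le.mp (h (x - y))
  have hpar := parallelogram_law_with_norm ℝ x y
  have hpar' : m * (‖x + y‖ ^ 2 + ‖x - y‖ ^ 2) = 4 * (m * ‖x‖ ^ 2) := by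
    rw [hpar, hyn]; ring
  have key : 4 * (‖x‖ * ‖A x‖) ≤ 4 * (m * ‖x‖ ^ 2) := by
    rw [← hinner]
    nlinarith [hb1.2, hb2.1, hpar', pol]
  rw [← mul_le_mul_iff_right₀ hxpos]
  nlinarith [key]

lemma exists_approx {Y : Type*} [NormedAddCommGroup Y] [InnerProductSpace ℝ Y]
    (A : Y →L[ℝ] Y) (hA : ∀ x y : Y, ⟪A x, y⟫ = ⟪x, A y⟫) {ε : ℝ} (hε : 0 < ε)
    (hεA : ε < ‖A‖) : ∃ y : Y, ‖y‖ ≤ 1 ∧ ‖A‖ - ε < |⟪A y, y⟫| := by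
  by_contra hcon
  push_neg at hcon
  have hglob : ∀ z : Y, |⟪A z, z⟫| ≤ (‖A‖ - ε) * ‖z‖ ^ 2 := by
    intro z
    rcases eq_or_ne z 0 with rfl | hz
    · simp
    have hz' : (0:ℝ) < ‖z‖ := norm_pos_iff.mpr hz
    have hu : ‖(‖z‖⁻¹ • z)‖ ≤ 1 := by
      rw [norm_smul, Real.norm_eq_abs, abs_of_pos (by positivity)]
      rw [inv_mul_cancel₀ hz'.ne']
    have h1 := hcon (‖z‖⁻¹ • z) hu
    rw [map_smul, real_inner_smul_left, real_inner_smul_right, abs_mul, abs_mul,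
      abs_inv, abs_norm] at h1
    rw [← mul_le_mul_iff_right₀ (show (0:ℝ) < ‖z‖⁻¹ * ‖z‖⁻¹ by positivity)]
    calc ‖z‖⁻¹ * ‖z‖⁻¹ * |⟪A z, z⟫| = ‖z‖⁻¹ * (‖z‖⁻¹ * |⟪A z, z⟫|) := by ring
    _ ≤ ‖A‖ - ε := h1
    _ = ‖z‖⁻¹ * ‖z‖⁻¹ * ((‖A‖ - ε) * ‖z‖ ^ 2) := by
        rw [pow_two]; field_simp
  have := symm_opnorm_le A hA (by linarith) hglob
  linarith

lemma inv_bound {Y : Type*} [NormedAddCommGroup Y] [InnerProductSpace ℝ Y] [CompleteSpace Y]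
    (X : Submodule ℝ Y) (T : X →ₗ[ℝ] Y)
    (hT : ∀ x y : X, ⟪T x, (y : Y)⟫ = ⟪(x : Y), T y⟫) (hbij : Function.Bijective T) :
    ∃ K : ℝ, 0 ≤ K ∧ ∀ x : X, ‖(x : Y)‖ ≤ K * ‖T x‖ := by
  let e := LinearEquiv.ofBijective T hbij
  have heT : ∀ x : X, e x = T x := fun _ => rfl
  have hTe : ∀ y : Y, T (e.symm y) = y := fun y => by
    rw [← heT]; exact e.apply_symm_apply y
  let B : Y →ₗ[ℝ] Y := X.subtype ∘ₗ e.symm.toLinearMap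
  have hBapp : ∀ y : Y, B y = (e.symm y : Y) := fun _ => rfl
  have hBsym : B.IsSymmetric := by
    intro y z
    calc ⟪B y, z⟫ = ⟪(e.symm y : Y), T (e.symm z)⟫ := by rw [hBapp, hTe]
    _ = ⟪T (e.symm y), (e.symm z : Y)⟫ := (hT _ _).symm
    _ = ⟪y, B z⟫ := by rw [hTe, hBapp]
  have hBcont : Continuous B := hBsym.continuous
  let B' : Y →L[ℝ] Y := ⟨B, hBcont⟩
  refine ⟨‖B'‖, norm_nonneg _, fun x => ?_⟩
  have hx : (x : Y) = B' (T x) := by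
    show (x : Y) = (e.symm (T x) : Y)
    rw [← heT, e.symm_apply_apply]
  rw [hx]
  exact B'.le_opNorm _

set_option maxHeartbeats 2000000 in
/-- Dolph–Hammerstein: if the spectrum of the self-adjoint operator `L` (densely
defined, with domain `X`) is disjoint from `[-c, c]` and `N` is Lipschitz with
constant `n < c`, then `F = L - N : X → Y` is a bijection onto `Y`. -/
theorem stmt0
    {Y : Type*} [NormedAddCommGroup Y] [InnerProductSpace ℝ Y] [CompleteSpace Y]
    (X : Submodule ℝ Y) (hdense : Dense (X : Set Y))
    (L : X →ₗ[ℝ] Y)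
    (hsa : ∀ x y : X, ⟪L x, (y : Y)⟫ = ⟪(x : Y), L y⟫)
    (c : ℝ) (hc : 0 < c)
    -- `σ(L) ∩ [-c,c] = ∅` : every `μ ∈ [-c,c]` is in the resolvent set of `L`
    (hspec : ∀ μ ∈ Set.Icc (-c) c,
      Function.Bijective (fun x : X => L x - μ • (x : Y)))
    (n : ℝ≥0) (N : Y → Y) (hN : LipschitzWith n N) (hn : (n : ℝ) < c) :
    Function.Bijective (fun x : X => L x - N (x : Y)) := by
  -- the inverse of `L`, as an opaque continuous linear map
  obtain ⟨A, hAsym, hALx, hAmem⟩ :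
      ∃ A : Y →L[ℝ] Y, (∀ x y : Y, ⟪A x, y⟫ = ⟪x, A y⟫) ∧
        (∀ x : X, A (L x) = (x : Y)) ∧
        (∀ y : Y, ∃ x : X, (x : Y) = A y ∧ L x = y) := by
    have hbij0 : Function.Bijective ⇑L := by
      have h := hspec 0 ⟨by linarith, hc.le⟩
      simpa using h
    set e := LinearEquiv.ofBijective L hbij0 with he
    have heL : ∀ x : X, e x = L x := fun _ => rfl
    have hLA : ∀ y : Y, L (e.symm y) = y := fun y => by
      rw [← heL]; exact e.apply_symm_apply y
    have hAL : ∀ x : X, e.symm (L x) = x := fun x => by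
      rw [← heL]; exact e.symm_apply_apply x
    let Alin : Y →ₗ[ℝ] Y := X.subtype ∘ₗ e.symm.toLinearMap
    have hAapp : ∀ y : Y, Alin y = (e.symm y : Y) := fun _ => rfl
    have hAsymm : Alin.IsSymmetric := by
      intro y z
      calc ⟪Alin y, z⟫ = ⟪(e.symm y : Y), L (e.symm z)⟫ := by rw [hAapp, hLA]
      _ = ⟪L (e.symm y), (e.symm z : Y)⟫ := (hsa _ _).symm
      _ = ⟪y, Alin z⟫ := by rw [hLA, hAapp]
    refine ⟨⟨Alin, hAsymm.continuous⟩, fun x y => hAsymm x y, fun x => ?_, fun y => ?_⟩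
    · show (e.symm (L x) : Y) = (x : Y)
      rw [hAL]
    · exact ⟨e.symm y, rfl, hLA y⟩
  -- bounded inverses of `L - μ`
  have hresall : ∀ μ ∈ Set.Icc (-c) c,
      ∃ K : ℝ, 0 ≤ K ∧ ∀ x : X, ‖(x : Y)‖ ≤ K * ‖L x - μ • (x : Y)‖ := by
    intro μ hμ
    have hsym : ∀ x y : X,
        ⟪(L - μ • X.subtype) x, (y : Y)⟫ = ⟪(x : Y), (L - μ • X.subtype) y⟫ := by
      intro x y
      simp only [LinearMap.sub_apply, LinearMap.smul_apply, Submodule.subtype_apply,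
        inner_sub_left, inner_sub_right, real_inner_smul_left, real_inner_smul_right,
        hsa x y]
    have hb : Function.Bijective ⇑(L - μ • X.subtype) := by
      have := hspec μ hμ
      exact this
    obtain ⟨K, hK0, hK⟩ := inv_bound X (L - μ • X.subtype) hsym hb
    exact ⟨K, hK0, fun x => by simpa [LinearMap.sub_apply] using hK x⟩
  -- the key estimate: `c‖x‖ ≤ ‖L x‖`
  have hbound : ∀ x : X, c * ‖(x : Y)‖ ≤ ‖L x‖ := by
    by_contra hcon
    push_neg at hcon
    obtain ⟨x₀, hx₀⟩ := hcon
    obtain ⟨M, hM⟩ : ∃ M : ℝ, M = ‖A‖ := ⟨_, rfl⟩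
    have hx₀ne : x₀ ≠ 0 := by
      rintro rfl
      simp at hx₀
    have hx0pos : (0:ℝ) < ‖(x₀ : Y)‖ := by
      rw [norm_pos_iff]
      exact fun h => hx₀ne (by exact_mod_cast Subtype.ext h)
    have hA0 : A (L x₀) = (x₀ : Y) := hALx x₀
    have hAle : ‖(x₀ : Y)‖ ≤ M * ‖L x₀‖ := by
      rw [← hA0, hM]; exact A.le_opNorm _
    have hMpos : (0:ℝ) < M := by nlinarith [norm_nonneg (L x₀)]
    have hMc : 1 < c * M := by nlinarith [norm_nonneg (L x₀)]
    have hinvM : 1 / M < c := by rw [div_lt_iff₀ hMpos]; linarith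
    have hinvMpos : (0:ℝ) < 1 / M := by positivity
    obtain ⟨K₁, hK10, hK1⟩ := hresall (1 / M) ⟨by linarith, hinvM.le⟩
    obtain ⟨K₂, hK20, hK2⟩ := hresall (-(1 / M)) ⟨by linarith, by linarith⟩
    obtain ⟨K, hKdef⟩ : ∃ K : ℝ, K = max K₁ K₂ := ⟨_, rfl⟩
    have hK0 : (0:ℝ) ≤ K := by rw [hKdef]; exact le_trans hK10 (le_max_left _ _)
    obtain ⟨ε, hεdef⟩ : ∃ ε : ℝ, ε = min (M / 2) (M ^ 3 / (8 * (K + 1) ^ 2)) := ⟨_, rfl⟩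
    have hε : 0 < ε := by rw [hεdef]; positivity
    have hεM2 : ε ≤ M / 2 := by rw [hεdef]; exact min_le_left _ _
    have hεM : ε < M := by linarith
    have hεA : ε < ‖A‖ := hM ▸ hεM
    obtain ⟨y, hy1, hy2⟩ := exists_approx A hAsym hε hεA
    rw [← hM] at hy2
    set a := ⟪A y, y⟫ with ha
    obtain ⟨lam, hlam⟩ : ∃ l : ℝ, l = if 0 ≤ a then M else -M := ⟨_, rfl⟩
    have hlamabs : |lam| = M := by
      rw [hlam]; split_ifs <;> simp [abs_of_pos hMpos, abs_of_neg, hMpos]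
    have hlama : lam * a = M * |a| := by
      rw [hlam]; split_ifs with hsign
      · rw [abs_of_nonneg hsign]
      · rw [abs_of_neg (not_le.mp hsign)]; ring
    have hlamsq : lam ^ 2 = M ^ 2 := by
      rw [hlam]; split_ifs <;> ring
    have hlamne : lam ≠ 0 := by
      rw [hlam]; split_ifs
      · exact hMpos.ne'
      · exact (neg_ne_zero.mpr hMpos.ne')
    obtain ⟨μ, hμdef⟩ : ∃ m : ℝ, m = lam⁻¹ := ⟨_, rfl⟩
    have hmulam : μ * lam = 1 := by rw [hμdef]; exact inv_mul_cancel₀ hlamne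
    have hμabs : |μ| = 1 / M := by
      rw [hμdef, abs_inv, hlamabs, one_div]
    have hKμ : ∀ x : X, ‖(x : Y)‖ ≤ K * ‖L x - μ • (x : Y)‖ := by
      intro x
      rw [hKdef]
      have hμval : μ = 1 / M ∨ μ = -(1 / M) := by
        rw [hμdef, hlam]; split_ifs
        · left; rw [one_div]
        · right; rw [one_div, inv_neg]
      rcases hμval with h | h
      · rw [h]
        exact (hK1 x).trans (mul_le_mul_of_nonneg_right (le_max_left _ _) (norm_nonneg _))
      · rw [h]
        exact (hK2 x).trans (mul_le_mul_of_nonneg_right (le_max_right _ _) (norm_nonneg _))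
    have h2 : M - ε < ‖A y‖ := by
      have hcs : |a| ≤ ‖A y‖ * ‖y‖ := abs_real_inner_le_norm _ _
      nlinarith [norm_nonneg (A y), norm_nonneg y]
    have hAy : ‖A y‖ ≤ M := by
      have h := A.le_opNorm y
      rw [← hM] at h
      nlinarith [norm_nonneg (A y)]
    have hs : ‖A y - lam • y‖ ^ 2 = ‖A y‖ ^ 2 - 2 * (lam * a) + lam ^ 2 * ‖y‖ ^ 2 := by
      rw [norm_sub_sq_real, real_inner_smul_right, norm_smul, Real.norm_eq_abs, mul_pow,
        sq_abs, ← ha]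
    have h1 : ‖A y - lam • y‖ ^ 2 ≤ 2 * M * ε := by
      rw [hs, hlamsq]
      have h4 : M * (M - ε) < lam * a := by
        rw [hlama]; exact mul_lt_mul_of_pos_left hy2 hMpos
      have hAy2 : ‖A y‖ ^ 2 ≤ M ^ 2 := by nlinarith [norm_nonneg (A y)]
      have hysq : ‖y‖ ^ 2 ≤ 1 := by nlinarith [norm_nonneg y]
      have hy2sq : M ^ 2 * ‖y‖ ^ 2 ≤ M ^ 2 := mul_le_of_le_one_right (sq_nonneg M) hysq
      nlinarith
    have hsqrt : ‖A y - lam • y‖ ≤ Real.sqrt (2 * M * ε) := by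
      have h6 := Real.sqrt_le_sqrt h1
      rwa [Real.sqrt_sq (norm_nonneg _)] at h6
    obtain ⟨x, hxA, hLx⟩ := hAmem y
    have hLmu : L x - μ • (x : Y) = (-μ) • (A y - lam • y) := by
      have h5 : -μ * lam = -1 := by rw [neg_mul, hmulam]
      calc L x - μ • (x : Y) = y - μ • (A y) := by rw [hLx, hxA]
      _ = (-μ) • (A y - lam • y) := by
          rw [smul_sub, smul_smul, h5, neg_smul, neg_smul, one_smul, sub_neg_eq_add]
          abel
    have hxb := hKμ x
    rw [hLmu, norm_smul, Real.norm_eq_abs, abs_neg, hμabs, hxA] at hxb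
    -- numeric contradiction
    have hεle : ε ≤ M ^ 3 / (8 * (K + 1) ^ 2) := by
      rw [hεdef]; exact min_le_right _ _
    have harg : 2 * M * ε ≤ (M ^ 2 / (2 * (K + 1))) ^ 2 := by
      have h7 : (M ^ 2 / (2 * (K + 1))) ^ 2 = M ^ 4 / (4 * (K + 1) ^ 2) := by
        rw [div_pow]; ring_nf
      rw [h7]
      have h8 : 2 * M * ε ≤ 2 * M * (M ^ 3 / (8 * (K + 1) ^ 2)) :=
        mul_le_mul_of_nonneg_left hεle (by positivity)
      calc 2 * M * ε ≤ 2 * M * (M ^ 3 / (8 * (K + 1) ^ 2)) := h8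
      _ = M ^ 4 / (4 * (K + 1) ^ 2) := by field_simp; ring
    have hsle : Real.sqrt (2 * M * ε) ≤ M ^ 2 / (2 * (K + 1)) := by
      have h6 := Real.sqrt_le_sqrt harg
      rwa [Real.sqrt_sq (by positivity)] at h6
    have h9 : K * (1 / M * ‖A y - lam • y‖) ≤ K * (1 / M * (M ^ 2 / (2 * (K + 1)))) := by
      apply mul_le_mul_of_nonneg_left _ hK0
      exact mul_le_mul_of_nonneg_left (hsqrt.trans hsle) (by positivity)
    have h10 : K * (1 / M * (M ^ 2 / (2 * (K + 1)))) ≤ M / 2 := by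
      have h11 : 1 / M * (M ^ 2 / (2 * (K + 1))) = M / (2 * (K + 1)) := by
        field_simp
      rw [h11, mul_div_assoc', div_le_div_iff₀ (by positivity) (by norm_num : (0:ℝ) < 2)]
      nlinarith
    linarith
  -- `A` is Lipschitz with constant `1/c`
  have hAlip : ∀ w : Y, c * ‖A w‖ ≤ ‖w‖ := by
    intro w
    obtain ⟨x, hxA, hLx⟩ := hAmem w
    have := hbound x
    rwa [hLx, hxA] at this
  -- contraction argument
  haveI : Nonempty Y := ⟨0⟩
  have main : ∀ y : Y, ∃ z : Y, Function.IsFixedPt (fun z => A (N z + y)) z ∧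
      ∀ z' : Y, Function.IsFixedPt (fun z => A (N z + y)) z' → z' = z := by
    intro y
    set g : Y → Y := fun z => A (N z + y) with hg
    have hκc : (0:ℝ) ≤ (n : ℝ) / c := by positivity
    have hglip : LipschitzWith ⟨(n : ℝ) / c, hκc⟩ g := by
      apply LipschitzWith.of_dist_le_mul
      intro z z'
      have hgz : g z - g z' = A (N z - N z') := by
        rw [hg]
        simp only [← map_sub]
        congr 1
        abel
      rw [dist_eq_norm, hgz]
      have h1 := hAlip (N z - N z')
      have h2 : ‖N z - N z'‖ ≤ (n : ℝ) * dist z z' := by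
        rw [← dist_eq_norm]
        exact hN.dist_le_mul z z'
      show ‖A (N z - N z')‖ ≤ (n : ℝ) / c * dist z z'
      rw [div_mul_eq_mul_div, le_div_iff₀ hc, mul_comm]
      nlinarith [dist_nonneg (x := z) (y := z')]
    have hκ1 : (⟨(n : ℝ) / c, hκc⟩ : ℝ≥0) < 1 := by
      show (n : ℝ) / c < 1
      rw [div_lt_one hc]
      exact hn
    have hcontr : ContractingWith ⟨(n : ℝ) / c, hκc⟩ g := ⟨hκ1, hglip⟩
    exact ⟨hcontr.fixedPoint g, hcontr.fixedPoint_isFixedPt,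
      fun z' hz' => hcontr.fixedPoint_unique hz'⟩
  constructor
  · intro x₁ x₂ h12
    simp only at h12
    obtain ⟨z, hz, huniq⟩ := main (L x₁ - N (x₁ : Y))
    have f1 : Function.IsFixedPt (fun z => A (N z + (L x₁ - N (x₁ : Y)))) (x₁ : Y) := by
      show A (N (x₁ : Y) + (L x₁ - N (x₁ : Y))) = (x₁ : Y)
      rw [add_sub_cancel, hALx]
    have f2 : Function.IsFixedPt (fun z => A (N z + (L x₁ - N (x₁ : Y)))) (x₂ : Y) := by
      show A (N (x₂ : Y) + (L x₁ - N (x₁ : Y))) = (x₂ : Y)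
      rw [h12, add_sub_cancel, hALx]
    have he12 : (x₁ : Y) = (x₂ : Y) := by
      rw [huniq _ f1, huniq _ f2]
    exact Subtype.ext he12
  · intro y
    obtain ⟨z, hz, -⟩ := main y
    obtain ⟨x, hxA, hLx⟩ := hAmem (N z + y)
    have hcoe : (x : Y) = z := hxA.trans hz
    refine ⟨x, ?_⟩
    simp only
    rw [hLx, hcoe, add_sub_cancel_left]
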